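/- Let S = U ++ [c] ++ V be a string in which c does not occur in V (so the displayed occurrence of c is the last occurrence of c in S). Then for every string T, the delete–insert edit distance satisfies d_DI(S, T ++ [c]) = min( 1 + d_DI(S, T), |V| + d_DI(U, T) ); that is, if the last character of the target is matched to an occurrence in the source, it is optimal to match it to the last such occurrence. -/

import Mathlib

/-- `StepsIn R k S T` holds if there is a sequence of exactly `k` steps of the
relation `R` transforming `S` into `T`. -/
def StepsIn {α : Type*} (R : List α → List α → Prop) : ℕ → List α → List α → Prop
  | 0, S, T => S = T
  | n + 1, S, T => ∃ M, R S M ∧ StepsIn R n M T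

/-- A single delete or insert operation on a string. -/
inductive DIStep {α : Type*} : List α → List α → Prop
  | del (U V : List α) (c : α) : DIStep (U ++ [c] ++ V) (U ++ V)
  | ins (U V : List α) (c : α) : DIStep (U ++ V) (U ++ [c] ++ V)

/-- The delete–insert edit distance: the minimum number of single-character
deletions and insertions transforming `S` into `T`. -/
noncomputable def dDI {α : Type*} (S T : List α) : ℕ :=
  sInf {n | StepsIn DIStep n S T}

/-- The length of a longest common subsequence of `S` and `T`. -/
noncomputable def lcss {α : Type*} (S T : List α) : ℕ :=
  sSup {n | ∃ L : List α, L.Sublist S ∧ L.Sublist T ∧ L.length = n}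

namespace DIAux

variable {α : Type*}

lemma stepsIn_trans {R : List α → List α → Prop} {m n : ℕ} {S M T : List α}
    (h1 : StepsIn R m S M) (h2 : StepsIn R n M T) : StepsIn R (m + n) S T := by
  induction m generalizing S with
  | zero =>
    have : S = M := h1
    rw [Nat.zero_add, this]; exact h2
  | succ m ih =>
    obtain ⟨X, hX, hrest⟩ := h1
    rw [Nat.succ_add]
    exact ⟨X, hX, ih hrest⟩

lemma diStep_symm {S T : List α} (h : DIStep S T) : DIStep T S := by
  cases h with
  | del U V c => exact DIStep.ins U V c
  | ins U V c => exact DIStep.del U V c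

lemma stepsIn_symm {n : ℕ} {S T : List α} (h : StepsIn DIStep n S T) :
    StepsIn DIStep n T S := by
  induction n generalizing S with
  | zero => exact (h : S = T).symm
  | succ n ih =>
    obtain ⟨M, hM, hrest⟩ := h
    have h1 : StepsIn DIStep 1 M S := ⟨S, diStep_symm hM, rfl⟩
    simpa using stepsIn_trans (ih hrest) h1

lemma diStep_prefix (P : List α) {S T : List α} (h : DIStep S T) :
    DIStep (P ++ S) (P ++ T) := by
  cases h with
  | del U V c => simpa [List.append_assoc] using DIStep.del (P ++ U) V c
  | ins U V c => simpa [List.append_assoc] using DIStep.ins (P ++ U) V c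

lemma stepsIn_prefix (P : List α) {n : ℕ} {S T : List α} (h : StepsIn DIStep n S T) :
    StepsIn DIStep n (P ++ S) (P ++ T) := by
  induction n generalizing S with
  | zero => exact congrArg (P ++ ·) (h : S = T)
  | succ n ih =>
    obtain ⟨M, hM, hrest⟩ := h
    exact ⟨P ++ M, diStep_prefix P hM, ih hrest⟩

/-- Deleting down along a sublist. -/
lemma stepsIn_del {L S : List α} (h : L.Sublist S) :
    StepsIn DIStep (S.length - L.length) S L := by
  induction h with
  | slnil => exact (rfl : ([] : List α) = [])
  | @cons L S a h ih =>
    have hl := h.length_le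
    have hlen : (a :: S).length - L.length = (S.length - L.length) + 1 := by
      simp only [List.length_cons]; omega
    rw [hlen]
    exact ⟨S, by simpa using DIStep.del [] S a, ih⟩
  | @cons_cons L S a h ih =>
    have : (a :: S).length - (a :: L).length = S.length - L.length := by
      simp only [List.length_cons]; omega
    rw [this]
    simpa using stepsIn_prefix [a] ih

lemma steps_set_nonempty (S T : List α) :
    StepsIn DIStep (S.length + T.length) S T := by
  have h1 : StepsIn DIStep S.length S [] := by simpa using stepsIn_del (List.nil_sublist S)
  have h2 : StepsIn DIStep T.length ([] : List α) T := by
    simpa using stepsIn_symm (stepsIn_del (List.nil_sublist T))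
  exact stepsIn_trans h1 h2

lemma lcs_bdd (S T : List α) :
    BddAbove {n | ∃ L : List α, L.Sublist S ∧ L.Sublist T ∧ L.length = n} := by
  refine ⟨S.length, fun n hn => ?_⟩
  obtain ⟨L, h1, _, h3⟩ := hn
  exact h3 ▸ h1.length_le

lemma lcs_nonempty (S T : List α) :
    {n | ∃ L : List α, L.Sublist S ∧ L.Sublist T ∧ L.length = n}.Nonempty :=
  ⟨0, ⟨[], List.nil_sublist _, List.nil_sublist _, rfl⟩⟩

lemma exists_lcs (S T : List α) :
    ∃ L : List α, L.Sublist S ∧ L.Sublist T ∧ L.length = lcss S T :=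
  Nat.sSup_mem (lcs_nonempty S T) (lcs_bdd S T)

lemma le_lcss {L S T : List α} (h1 : L.Sublist S) (h2 : L.Sublist T) :
    L.length ≤ lcss S T :=
  le_csSup (lcs_bdd S T) ⟨L, h1, h2, rfl⟩

lemma lcss_le_left (S T : List α) : lcss S T ≤ S.length := by
  obtain ⟨L, h1, _, h3⟩ := exists_lcs S T
  exact h3 ▸ h1.length_le

lemma lcss_le_right (S T : List α) : lcss S T ≤ T.length := by
  obtain ⟨L, _, h2, h3⟩ := exists_lcs S T
  exact h3 ▸ h2.length_le

lemma lcss_mono_left {S S' : List α} (T : List α) (h : S.Sublist S') :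
    lcss S T ≤ lcss S' T := by
  obtain ⟨L, h1, h2, h3⟩ := exists_lcs S T
  exact h3 ▸ le_lcss (h1.trans h) h2

lemma lcss_mono_right (S : List α) {T T' : List α} (h : T.Sublist T') :
    lcss S T ≤ lcss S T' := by
  obtain ⟨L, h1, h2, h3⟩ := exists_lcs S T
  exact h3 ▸ le_lcss h1 (h2.trans h)

/-- Deleting the middle character from a supersequence costs at most one. -/
lemma sublist_middle {L U V : List α} {c : α} (h : L.Sublist (U ++ [c] ++ V)) :
    ∃ L' : List α, L'.Sublist L ∧ L'.Sublist (U ++ V) ∧ L.length ≤ L'.length + 1 := by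
  obtain ⟨A, B, rfl, hA, hB⟩ := List.sublist_append_iff.mp h
  obtain ⟨A1, A2, rfl, hA1, hA2⟩ := List.sublist_append_iff.mp hA
  refine ⟨A1 ++ B, ?_, hA1.append hB, ?_⟩
  · rw [List.append_assoc]
    exact (List.sublist_append_right A2 B).append_left A1
  · have : A2.length ≤ 1 := hA2.length_le
    simp only [List.length_append]; omega

lemma stepsIn_lower {n : ℕ} {S T : List α} (h : StepsIn DIStep n S T) :
    S.length + T.length ≤ n + 2 * lcss S T := by
  induction n generalizing S with
  | zero =>
    have : S = T := h
    subst this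
    have := le_lcss (S := S) (T := S) (List.Sublist.refl S) (List.Sublist.refl S)
    omega
  | succ n ih =>
    obtain ⟨M, hM, hrest⟩ := h
    have hIH := ih hrest
    cases hM with
    | del A B d =>
      have hmono : lcss (A ++ B) T ≤ lcss (A ++ [d] ++ B) T := by
        refine lcss_mono_left T ?_
        rw [List.append_assoc]
        exact ((List.sublist_cons_self d B).append_left A)
      simp only [List.length_append, List.length_cons, List.length_singleton, List.length_nil] at *
      omega
    | ins A B d =>
      have hkey : lcss (A ++ [d] ++ B) T ≤ lcss (A ++ B) T + 1 := by
        obtain ⟨L, h1, h2, h3⟩ := exists_lcs (A ++ [d] ++ B) T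
        obtain ⟨L', hL'L, hL'M, hlen⟩ := sublist_middle h1
        have := le_lcss hL'M (hL'L.trans h2)
        omega
      simp only [List.length_append, List.length_cons, List.length_singleton, List.length_nil] at *
      omega

/-- The classical identity: edit distance = |S| + |T| - 2·LCS. -/
lemma dDI_eq (S T : List α) : dDI S T = S.length + T.length - 2 * lcss S T := by
  have hne : {n | StepsIn DIStep n S T}.Nonempty := ⟨_, steps_set_nonempty S T⟩
  have hmem : StepsIn DIStep (dDI S T) S T := Nat.sInf_mem hne
  have hlow := stepsIn_lower hmem
  obtain ⟨L, h1, h2, h3⟩ := exists_lcs S T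
  have hup : dDI S T ≤ (S.length - L.length) + (T.length - L.length) := by
    apply Nat.sInf_le
    exact stepsIn_trans (stepsIn_del h1) (stepsIn_symm (stepsIn_del h2))
  have hl1 := h1.length_le
  have hl2 := h2.length_le
  omega

lemma sublist_concat_cancel {L U : List α} {c : α} (h : (L ++ [c]).Sublist (U ++ [c])) :
    L.Sublist U := by
  obtain ⟨A, B, heq, hA, hB⟩ := List.sublist_append_iff.mp h
  rcases List.sublist_singleton.mp hB with rfl | rfl
  · rw [List.append_nil] at heq
    rw [← heq] at hA
    exact (List.sublist_append_left L [c]).trans hA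
  · have : L = A := List.append_cancel_right heq
    exact this ▸ hA

lemma lcss_append_last {U V T : List α} {c : α} (hc : c ∉ V) :
    lcss (U ++ [c] ++ V) (T ++ [c]) = max (lcss (U ++ [c] ++ V) T) (lcss U T + 1) := by
  apply le_antisymm
  · obtain ⟨L, hL1, hL2, hL3⟩ := exists_lcs (U ++ [c] ++ V) (T ++ [c])
    rw [← hL3]
    obtain ⟨L1, L2, rfl, h1, h2⟩ := List.sublist_append_iff.mp hL2
    rcases List.sublist_singleton.mp h2 with rfl | rfl
    · rw [List.append_nil] at hL1 ⊢
      exact le_max_of_le_left (le_lcss hL1 h1)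
    · -- L = L1 ++ [c]
      obtain ⟨M1, M2, heq, hM1, hM2⟩ := List.sublist_append_iff.mp hL1
      rcases M2.eq_nil_or_concat with rfl | ⟨M2', x, rfl⟩
      · rw [List.append_nil] at heq
        subst heq
        have hLU : L1.Sublist U := sublist_concat_cancel hM1
        have := le_lcss hLU h1
        simp only [List.length_append, List.length_singleton]
        exact le_max_of_le_right (by omega)
      · exfalso
        rw [List.concat_eq_append, ← List.append_assoc] at heq
        obtain ⟨-, hcx⟩ := List.append_inj' heq rfl
        have hxc : x = c := by simpa using hcx.symm
        subst hxc
        exact hc (hM2.subset (by simp))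
  · apply max_le
    · exact lcss_mono_right _ (List.sublist_append_left T [c])
    · obtain ⟨L, h1, h2, h3⟩ := exists_lcs U T
      have hS : (L ++ [c]).Sublist (U ++ [c] ++ V) :=
        (h1.append (List.Sublist.refl [c])).trans (List.sublist_append_left _ V)
      have hT : (L ++ [c]).Sublist (T ++ [c]) := h2.append (List.Sublist.refl [c])
      have := le_lcss hS hT
      simp only [List.length_append, List.length_singleton] at this
      omega

end DIAux

theorem dDI_append_last_occurrence {α : Type*} [DecidableEq α]
    (U V T : List α) (c : α) (hc : c ∉ V) :
    dDI (U ++ [c] ++ V) (T ++ [c]) =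
      min (1 + dDI (U ++ [c] ++ V) T) (V.length + dDI U T) := by
  rw [DIAux.dDI_eq, DIAux.dDI_eq, DIAux.dDI_eq, DIAux.lcss_append_last hc]
  have h1 := DIAux.lcss_le_left (U ++ [c] ++ V) T
  have h2 := DIAux.lcss_le_right (U ++ [c] ++ V) T
  have h3 := DIAux.lcss_le_left U T
  have h4 := DIAux.lcss_le_right U T
  simp only [List.length_append, List.length_cons, List.length_singleton,
    List.length_nil] at *
  omega
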